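/- arXiv:2212.02005 — 2 statements merged into one kernel-verified Lean document; each statement's English description precedes it below -/
import Mathlib

section
/- Let Δ > 0 be a fundamental discriminant with conductor D, χ = χ_Δ, and ω a D-th root of unity of exact order d with d < D and d | D. Then (1/2)∑_{a=0}^{D-1} χ(a)(1+χ(a))ω^a = (1/2)·μ(d)·φ(D)/φ(d). -/
open Finset Polynomial
set_option maxHeartbeats 1000000


private lemma pow_modEq {d : ℕ} {ω : ℂ} (hω : IsPrimitiveRoot ω d)
    {a b : ℕ} (h : a ≡ b [MOD d]) : ω ^ a = ω ^ b := by
  rw [pow_eq_pow_mod a hω.pow_eq_one, pow_eq_pow_mod b hω.pow_eq_one, h]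

private lemma sum_primRoots (n : ℕ) (hn : 0 < n) :
    ∑ z ∈ primitiveRoots n ℂ, z = (ArithmeticFunction.moebius n : ℂ) := by
  have key : ∀ m : ℕ, 0 < m →
      ∑ e ∈ m.divisors, (∑ z ∈ primitiveRoots e ℂ, z) = if m = 1 then 1 else 0 := by
    intro m hm
    have : NeZero m := ⟨hm.ne'⟩
    have hζ := Complex.isPrimitiveRoot_exp m hm.ne'
    rw [← Finset.sum_biUnion (fun i _ j _ hij => IsPrimitiveRoot.disjoint hij),
      ← IsPrimitiveRoot.nthRoots_one_eq_biUnion_primitiveRoots]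
    have hval : (nthRootsFinset m (1:ℂ)).1 = nthRoots m (1:ℂ) :=
      Multiset.dedup_eq_self.mpr hζ.nthRoots_one_nodup
    have h1 : ∑ z ∈ nthRootsFinset m (1:ℂ), z
        = ∑ k ∈ Finset.range m, (Complex.exp (2 * Real.pi * Complex.I / m)) ^ k := by
      rw [Finset.sum_eq_multiset_sum, Finset.sum_eq_multiset_sum, hval,
        hζ.nthRoots_eq (one_pow m), Multiset.map_map]
      simp
    rw [h1]
    rcases eq_or_ne m 1 with rfl | hm1
    · simp
    · rw [if_neg hm1, geom_sum_eq (hζ.ne_one (lt_of_le_of_ne hm (Ne.symm hm1))) m, hζ.pow_eq_one]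
      simp
  have h2 := (ArithmeticFunction.sum_eq_iff_sum_mul_moebius_eq
    (f := fun e => ∑ z ∈ primitiveRoots e ℂ, z)
    (g := fun m => if m = 1 then 1 else 0)).mp key n hn
  rw [← h2]
  rw [Finset.sum_eq_single (n, 1)]
  · simp
  · rintro ⟨x, y⟩ hxy hne
    rw [Nat.mem_divisorsAntidiagonal] at hxy
    have : y ≠ 1 := by
      rintro rfl
      exact hne (by simp [← hxy.1])
    simp [this]
  · intro h
    exact absurd (Nat.mem_divisorsAntidiagonal.mpr ⟨by simp, hn.ne'⟩) h

private lemma sum_units_pow {d : ℕ} [NeZero d] {ω : ℂ} (hω : IsPrimitiveRoot ω d) :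
    ∑ v : (ZMod d)ˣ, ω ^ (v : ZMod d).val = (ArithmeticFunction.moebius d : ℂ) := by
  have hd : 0 < d := Nat.pos_of_ne_zero (NeZero.ne d)
  rw [← sum_primRoots d hd]
  refine Finset.sum_bij (fun v _ => ω ^ ((v : ZMod d).val)) ?_ ?_ ?_ ?_
  · intro v _
    exact (mem_primitiveRoots hd).2 (hω.pow_of_coprime _ (ZMod.val_coe_unit_coprime v))
  · intro v _ w _ h
    exact Units.ext (ZMod.val_injective d (hω.pow_inj (ZMod.val_lt _) (ZMod.val_lt _) h))
  · intro z hz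
    obtain ⟨i, hi, hcop, rfl⟩ := (hω.isPrimitiveRoot_iff).1 ((mem_primitiveRoots hd).1 hz)
    refine ⟨ZMod.unitOfCoprime i hcop, Finset.mem_univ _, ?_⟩
    have : ((ZMod.unitOfCoprime i hcop : (ZMod d)ˣ) : ZMod d).val = i % d := by
      simp [ZMod.unitOfCoprime, ZMod.val_natCast]
    show ω ^ ((ZMod.unitOfCoprime i hcop : (ZMod d)ˣ) : ZMod d).val = ω ^ i
    rw [this, ← pow_eq_pow_mod i hω.pow_eq_one]
  · intros; rfl


private lemma sum_range_eq_zmod {D : ℕ} [NeZero D] (g : ZMod D → ℂ) :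
    ∑ a ∈ Finset.range D, g a = ∑ x : ZMod D, g x := by
  refine Finset.sum_bij (fun a _ => (a : ZMod D)) (fun a _ => Finset.mem_univ _) ?_ ?_ ?_
  · intro a ha b hb h
    have h' : ((a : ZMod D)) = b := h
    rw [← ZMod.val_cast_of_lt (Finset.mem_range.1 ha), ← ZMod.val_cast_of_lt (Finset.mem_range.1 hb), h']
  · intro x _
    exact ⟨x.val, Finset.mem_range.2 (ZMod.val_lt x), ZMod.natCast_rightInverse x⟩
  · intros; rfl

private lemma sum_isUnit_eq_units {n : ℕ} [NeZero n] (f : ZMod n → ℂ) :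
    ∑ x : ZMod n, (if IsUnit x then f x else 0) = ∑ u : (ZMod n)ˣ, f u := by
  classical
  have h0 : ∑ x ∈ Finset.univ.filter (fun x => IsUnit x), f x
      = ∑ x : ZMod n, (if IsUnit x then f x else 0) := Finset.sum_filter _ f
  rw [← h0]
  symm
  refine Finset.sum_bij (fun u _ => (u : ZMod n)) ?_ ?_ ?_ ?_
  · intro u _; exact Finset.mem_filter.2 ⟨Finset.mem_univ _, u.isUnit⟩
  · intro u _ v _ h; exact Units.ext h
  · intro x hx
    have hu := (Finset.mem_filter.1 hx).2
    exact ⟨hu.unit, Finset.mem_univ _, hu.unit_spec.symm⟩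
  · intros; rfl

private lemma sum_comp_surj {G H : Type*} [Group G] [Group H] [Fintype G] [Fintype H]
    [DecidableEq H] (π : G →* H) (hsurj : Function.Surjective π) (F : H → ℂ) :
    ∑ g : G, F (π g) = (Fintype.card π.ker : ℂ) * ∑ h : H, F h := by
  classical
  rw [← Fintype.sum_fiberwise π (fun g => F (π g))]
  have hfib : ∀ b : H, ∑ a : {a // π a = b}, F (π a) = (Fintype.card π.ker : ℂ) * F b := by
    intro b
    have hcard : Fintype.card {a // π a = b} = Fintype.card π.ker := by
      obtain ⟨g0, rfl⟩ := hsurj b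
      exact Fintype.card_congr ((Equiv.subtypeEquivRight (fun a => by
        simp [Set.mem_preimage])).trans (π.fiberEquivKer g0))
    calc ∑ a : {a // π a = b}, F (π a) = ∑ _a : {a // π a = b}, F b := by
          apply Finset.sum_congr rfl; rintro ⟨a, ha⟩ _; rw [ha]
      _ = (Fintype.card {a // π a = b} : ℂ) * F b := by
          rw [Finset.sum_const, nsmul_eq_mul, Fintype.card]
      _ = _ := by rw [hcard]
  rw [Finset.sum_congr rfl (fun b _ => hfib b), ← Finset.mul_sum]

private lemma card_ker_mul {G H : Type*} [Group G] [Group H] [Fintype G] [Fintype H]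
    [DecidableEq H] (π : G →* H) (hsurj : Function.Surjective π) :
    Fintype.card π.ker * Fintype.card H = Fintype.card G := by
  classical
  have h1 : Nat.card H = Nat.card (G ⧸ π.ker) :=
    Nat.card_congr (QuotientGroup.quotientKerEquivOfSurjective π hsurj).toEquiv.symm
  have h2 := (Subgroup.card_eq_card_quotient_mul_card_subgroup π.ker).symm
  rw [← Nat.card_eq_fintype_card, ← Nat.card_eq_fintype_card, ← Nat.card_eq_fintype_card, h1,
    mul_comm]
  exact h2

/-- For the even primitive quadratic character `χ = χ_Δ` of conductor `D = Δ > 0` and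
`ω` a `D`-th root of unity of exact order `d` with `d ∣ D`, `d < D`, the Paley graph
eigenvalue `(1/2)∑_{a=0}^{D-1} χ(a)(1+χ(a))ω^a` equals `(1/2)·μ(d)·φ(D)/φ(d)`. -/
theorem stmt_7 (D : ℕ) [NeZero D] (χ : DirichletCharacter ℂ D)
    (hprim : χ.IsPrimitive) (hne : χ ≠ 1) (hquad : χ ^ 2 = 1)
    (heven : χ (-1) = 1) (d : ℕ) (hd : d ∣ D) (hdlt : d < D)
    (ω : ℂ) (hω : IsPrimitiveRoot ω d) :
    (∑ a ∈ Finset.range D, χ (a : ZMod D) * (1 + χ (a : ZMod D)) * ω ^ a) / 2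
      = (ArithmeticFunction.moebius d : ℂ) * (D.totient : ℂ) / (2 * (d.totient : ℂ)) := by
  classical
  have hdpos : 0 < d := Nat.pos_of_ne_zero (by
    rintro rfl
    exact NeZero.ne D (Nat.eq_zero_of_zero_dvd hd))
  haveI : NeZero d := ⟨hdpos.ne'⟩
  have hωD : ω ^ D = 1 := by
    obtain ⟨c, rfl⟩ := hd
    rw [pow_mul, hω.pow_eq_one, one_pow]
  set e : AddChar (ZMod D) ℂ := AddChar.zmodChar D hωD with he
  -- χ² pointwise
  have hsq : ∀ x : ZMod D, χ x * χ x = if IsUnit x then 1 else 0 := by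
    intro x
    have h1 : (χ ^ 2) x = χ x * χ x := by rw [pow_two]; rfl
    rw [← h1, hquad]
    split_ifs with hu
    · exact MulChar.one_apply hu
    · exact MulChar.map_nonunit 1 hu
  -- split the summand
  have hsplit : ∀ a ∈ Finset.range D, χ (a : ZMod D) * (1 + χ (a : ZMod D)) * ω ^ a
      = χ (a : ZMod D) * e (a : ZMod D) + (if IsUnit ((a : ℕ) : ZMod D) then ω ^ a else 0) := by
    intro a _
    rw [AddChar.zmodChar_apply' hωD a]
    rcases eq_or_ne ((if IsUnit ((a : ℕ) : ZMod D) then (1:ℂ) else 0)) 1 with h | h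
    all_goals {
      have := hsq (a : ZMod D)
      rw [mul_add, mul_one, add_mul, this]
      split_ifs with hu
      · ring
      · ring }
  rw [Finset.sum_congr rfl hsplit, Finset.sum_add_distrib]
  -- Gauss sum part vanishes
  have hgauss : ∑ a ∈ Finset.range D, χ (a : ZMod D) * e (a : ZMod D) = 0 := by
    rw [sum_range_eq_zmod (fun x => χ x * e x)]
    have : ¬ e.IsPrimitive := by
      intro hp
      refine hp (a := (d : ZMod D)) ?_ ?_
      · intro h0
        have hDd := (ZMod.natCast_eq_zero_iff d D).1 h0
        exact absurd (Nat.le_of_dvd hdpos hDd) (not_le.2 hdlt)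
      · ext x
        show e ((d : ZMod D) * x) = 1
        have hval : ((d : ZMod D) * x).val ≡ 0 [MOD d] := by
          have h1 : ((d : ZMod D) * x).val ≡ d * x.val [MOD D] := by
            have : ((d : ZMod D) * x) = ((d * x.val : ℕ) : ZMod D) := by
              push_cast
              rw [ZMod.natCast_val, ZMod.cast_id]
            rw [this, ZMod.val_natCast]
            exact (Nat.mod_modEq _ _)
          have h2 : ((d : ZMod D) * x).val ≡ d * x.val [MOD d] := h1.of_dvd hd
          calc ((d : ZMod D) * x).val ≡ d * x.val [MOD d] := h2
            _ ≡ 0 [MOD d] := (Nat.modEq_zero_iff_dvd).2 ⟨x.val, rfl⟩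
        show ω ^ (((d : ZMod D) * x).val) = 1
        rw [pow_modEq hω hval, pow_zero]
    have := gaussSum_eq_zero_of_isPrimitive_of_not_isPrimitive (χ := χ) e hprim this
    exact this
  rw [hgauss, zero_add]
  -- unit part
  set π := ZMod.unitsMap hd with hπ
  have hsurj : Function.Surjective π := ZMod.unitsMap_surjective hd
  have hunit : ∑ a ∈ Finset.range D, (if IsUnit ((a : ℕ) : ZMod D) then ω ^ a else 0)
      = (Fintype.card π.ker : ℂ) * (ArithmeticFunction.moebius d : ℂ) := by
    have h1 : ∑ a ∈ Finset.range D, (if IsUnit ((a : ℕ) : ZMod D) then ω ^ a else 0)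
        = ∑ x : ZMod D, (if IsUnit x then ω ^ x.val else 0) := by
      have hpow : ∀ a ∈ Finset.range D, (if IsUnit ((a : ℕ) : ZMod D) then ω ^ a else 0)
          = (fun x : ZMod D => if IsUnit x then ω ^ x.val else 0) ((a : ℕ) : ZMod D) := by
        intro a _
        have hval : (((a : ℕ) : ZMod D)).val = a % D := ZMod.val_natCast D a
        by_cases hu : IsUnit ((a : ℕ) : ZMod D)
        · rw [if_pos hu]
          show ω ^ a = if IsUnit ((a : ℕ) : ZMod D) then ω ^ (((a : ℕ) : ZMod D)).val else 0
          rw [if_pos hu, hval]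
          exact pow_modEq hω (Nat.mod_mod_of_dvd a hd).symm
        · rw [if_neg hu]
          show (0 : ℂ) = if IsUnit ((a : ℕ) : ZMod D) then ω ^ (((a : ℕ) : ZMod D)).val else 0
          rw [if_neg hu]
      rw [Finset.sum_congr rfl hpow,
        sum_range_eq_zmod (fun x : ZMod D => if IsUnit x then ω ^ x.val else 0)]
    rw [h1, sum_isUnit_eq_units (fun x => ω ^ x.val)]
    have h2 : ∀ u : (ZMod D)ˣ, ω ^ ((u : ZMod D).val) = ω ^ (((π u : (ZMod d)ˣ) : ZMod d).val) := by
      intro u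
      apply pow_modEq hω
      have : ((π u : (ZMod d)ˣ) : ZMod d) = ((((u : ZMod D).val : ℕ)) : ZMod d) := by
        rw [hπ, ZMod.unitsMap_def]
        simp only [Units.coe_map, MonoidHom.coe_coe, ZMod.castHom_apply]
        rw [← ZMod.natCast_val, ZMod.natCast_val]
      rw [this, ZMod.val_natCast]
      exact (Nat.mod_modEq _ _).symm
    rw [Finset.sum_congr rfl (fun u _ => h2 u)]
    rw [sum_comp_surj π hsurj (fun v => ω ^ (v : ZMod d).val), sum_units_pow hω]
  rw [hunit]
  have hcard : (Fintype.card π.ker : ℂ) * (d.totient : ℂ) = (D.totient : ℂ) := by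
    have := card_ker_mul π hsurj
    rw [ZMod.card_units_eq_totient, ZMod.card_units_eq_totient] at this
    exact_mod_cast this
  have htne : (d.totient : ℂ) ≠ 0 := by
    exact_mod_cast (Nat.totient_pos.2 hdpos).ne'
  rw [← hcard]
  field_simp
end

section
/- Let Δ > 0 be a fundamental discriminant with conductor D, χ = χ_Δ, and let F = {0, 1, …, ⌊D/2⌋ − 1} ⊆ Z/D viewed as vertices of the generalized Paley graph P_Δ. Then the number of boundary edges |∂F| equals 2∑_{i=1}^k α_i, where α_1, …, α_k are the elements a ∈ [1, ⌊D/2⌋] with χ(a) = 1 and k = φ(D)/4. -/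
/-- The generalized Paley graph on `ZMod D`: `u ~ v` iff (`u ≠ v` and)
`χ(v - u) = 1` (for even `χ` this relation is symmetric). -/
def paleyGraph (D : ℕ) [NeZero D] (χ : DirichletCharacter ℂ D) : SimpleGraph (ZMod D) :=
  SimpleGraph.fromRel (fun u v => χ (v - u) = 1)

open Classical in
private lemma natkey (D a : ℕ) (ha1 : 1 ≤ a) (haD : a < D) :
    ((Finset.range (D/2)).filter (fun x => ¬ (x + a) % D < D/2)).card = min a (D - a) := by
  have key : ∀ x ∈ Finset.range (D/2), (¬ (x + a) % D < D/2 ↔ (D/2 ≤ x + a ∧ x + a < D)) := by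
    intro x hx
    beta_reduce
    simp only [Finset.mem_range] at hx
    rcases Nat.lt_or_ge (x + a) D with h | h
    · rw [Nat.mod_eq_of_lt h]; omega
    · have hlt : x + a - D < D := by omega
      rw [Nat.mod_eq_sub_mod h, Nat.mod_eq_of_lt hlt]
      omega
  rw [Finset.filter_congr key]
  have h2 : (Finset.range (D/2)).filter (fun x => D/2 ≤ x + a ∧ x + a < D)
      = Finset.Ico (D/2 - a) (min (D/2) (D - a)) := by
    ext x
    simp only [Finset.mem_filter, Finset.mem_range, Finset.mem_Ico]
    omega
  rw [h2, Nat.card_Ico]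
  omega

open Classical in
/-- For `F = {0, 1, …, ⌊D/2⌋ − 1} ⊆ Z/D` in the generalized Paley graph `P_Δ`
(`χ = χ_Δ` even primitive quadratic of conductor `D = Δ > 0`), the number of boundary
edges `|∂F|` equals `2·∑ α_i`, where the `α_i` are the `a ∈ [1, ⌊D/2⌋]` with
`χ(a) = 1`; moreover there are `k = φ(D)/4` of them. -/
theorem stmt_18 (D : ℕ) [NeZero D] (χ : DirichletCharacter ℂ D)
    (hprim : χ.IsPrimitive) (hne : χ ≠ 1) (hquad : χ ^ 2 = 1) (heven : χ (-1) = 1) :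
    (Finset.univ.filter (fun uv : ZMod D × ZMod D =>
        uv.1 ∈ (Finset.range (D / 2)).image (fun a : ℕ => (a : ZMod D)) ∧
        uv.2 ∉ (Finset.range (D / 2)).image (fun a : ℕ => (a : ZMod D)) ∧
        (paleyGraph D χ).Adj uv.1 uv.2)).card
      = 2 * ∑ a ∈ (Finset.Icc 1 (D / 2)).filter (fun a : ℕ => χ (a : ZMod D) = 1), a ∧
    ((Finset.Icc 1 (D / 2)).filter (fun a : ℕ => χ (a : ZMod D) = 1)).card
      = D.totient / 4 := by
  have hD0 : D ≠ 0 := NeZero.ne D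
  have hD1 : D ≠ 1 := fun h => hne (DirichletCharacter.level_one' χ h)
  have hD2 : D ≠ 2 := by
    intro h
    subst h
    refine hne (MulChar.ext fun a => ?_)
    have ha : (a : ZMod 2) = 1 := by
      rcases (by decide : ∀ x : ZMod 2, x = 0 ∨ x = 1) (a : ZMod 2) with h | h
      · exact absurd h a.ne_zero
      · exact h
    rw [ha]
    simp
  have hD3 : 3 ≤ D := by omega
  haveI : Fact (1 < D) := ⟨by omega⟩
  set F := (Finset.range (D / 2)).image (fun a : ℕ => (a : ZMod D)) with hF
  have hmemF : ∀ u : ZMod D, u ∈ F ↔ u.val < D / 2 := by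
    intro u
    beta_reduce
    rw [hF]
    simp only [Finset.mem_image, Finset.mem_range]
    constructor
    · rintro ⟨a, ha, rfl⟩
      rwa [ZMod.val_natCast, Nat.mod_eq_of_lt (by omega)]
    · intro h
      beta_reduce
      exact ⟨u.val, h, ZMod.natCast_zmod_val u⟩
  have hχ0 : χ 0 = 0 := by
    refine χ.map_nonunit ?_
    rw [isUnit_zero_iff]
    exact fun h => zero_ne_one h
  have hne0 : ∀ d : ZMod D, χ d = 1 → d ≠ 0 := by
    intro d h h0
    rw [h0, hχ0] at h
    exact one_ne_zero h.symm
  have heven' : ∀ x : ZMod D, χ (-x) = χ x := by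
    intro x
    beta_reduce
    rw [← neg_one_mul, map_mul, heven, one_mul]
  have hquad' : ∀ x : ZMod D, IsUnit x → χ x = 1 ∨ χ x = -1 := by
    intro x hx
    beta_reduce
    have h1 : (χ ^ 2) x = (1 : DirichletCharacter ℂ D) x := by rw [hquad]
    rw [MulChar.pow_apply' χ two_ne_zero, MulChar.one_apply hx, pow_two] at h1
    exact mul_self_eq_one_iff.mp h1
  have hadj : ∀ u v : ZMod D, (paleyGraph D χ).Adj u v ↔ χ (v - u) = 1 := by
    intro u v
    beta_reduce
    simp only [paleyGraph, SimpleGraph.fromRel_adj]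
    constructor
    · rintro ⟨hne', h | h⟩
      · exact h
      · rw [← neg_sub, heven'] at h
        exact h
    · intro h
      beta_reduce
      refine ⟨?_, Or.inl h⟩
      rintro rfl
      rw [sub_self, hχ0] at h
      exact one_ne_zero h.symm
  set A := Finset.univ.filter (fun d : ZMod D => χ d = 1) with hA
  set T := (Finset.Icc 1 (D - 1)).filter (fun a : ℕ => χ (a : ZMod D) = 1) with hT
  set T₁ := (Finset.Icc 1 (D / 2)).filter (fun a : ℕ => χ (a : ZMod D) = 1) with hT₁
  set T₂ := (Finset.Icc (D / 2 + 1) (D - 1)).filter (fun a : ℕ => χ (a : ZMod D) = 1) with hT₂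
  -- cast facts
  have hcastsub : ∀ a : ℕ, a ≤ D → ((D - a : ℕ) : ZMod D) = -(a : ZMod D) := by
    intro a ha
    beta_reduce
    rw [Nat.cast_sub ha, ZMod.natCast_self, zero_sub]
  have hχsub : ∀ a : ℕ, a ≤ D → χ ((D - a : ℕ) : ZMod D) = χ (a : ZMod D) := by
    intro a ha
    beta_reduce
    rw [hcastsub a ha, heven']
  -- membership transfers between T₁ and T₂
  have hmem21 : ∀ b ∈ T₁, D - b ∈ T₂ := by
    intro b hb
    beta_reduce
    rw [hT₁, Finset.mem_filter, Finset.mem_Icc] at hb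
    obtain ⟨⟨hb1, hb2⟩, hbχ⟩ := hb
    have h2b : 2 * b ≠ D := by
      intro h2
      have hbd : b ∣ D := ⟨2, by omega⟩
      have hbu : ¬ IsUnit ((b : ℕ) : ZMod D) := by
        rw [ZMod.isUnit_iff_coprime]
        intro hcop
        have hb1' := Nat.Coprime.eq_one_of_dvd hcop hbd
        omega
      have := χ.map_nonunit hbu
      rw [hbχ] at this
      exact one_ne_zero this
    rw [hT₂, Finset.mem_filter, Finset.mem_Icc]
    refine ⟨⟨by omega, by omega⟩, ?_⟩
    rw [hχsub b (by omega)]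
    exact hbχ
  have hmem12 : ∀ a ∈ T₂, D - a ∈ T₁ := by
    intro a ha
    beta_reduce
    rw [hT₂, Finset.mem_filter, Finset.mem_Icc] at ha
    obtain ⟨⟨ha1, ha2⟩, haχ⟩ := ha
    rw [hT₁, Finset.mem_filter, Finset.mem_Icc]
    refine ⟨⟨by omega, by omega⟩, ?_⟩
    rw [hχsub a (by omega)]
    exact haχ
  have hTsplit : T = T₁ ∪ T₂ := by
    rw [hT, hT₁, hT₂, ← Finset.filter_union]
    congr 1
    ext x
    simp only [Finset.mem_union, Finset.mem_Icc]
    omega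
  have hdisj : Disjoint T₁ T₂ := by
    rw [Finset.disjoint_left]
    intro a ha1 ha2
    rw [hT₁, Finset.mem_filter, Finset.mem_Icc] at ha1
    rw [hT₂, Finset.mem_filter, Finset.mem_Icc] at ha2
    omega
  set Q := Finset.univ.filter
      (fun x : ZMod D × ZMod D => χ x.1 = 1 ∧ x.2 ∈ F ∧ x.2 + x.1 ∉ F) with hQ
  have hQcard : (Finset.univ.filter (fun uv : ZMod D × ZMod D =>
        uv.1 ∈ F ∧ uv.2 ∉ F ∧ (paleyGraph D χ).Adj uv.1 uv.2)).card = Q.card := by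
    refine Finset.card_nbij' (fun x => (x.2 - x.1, x.1)) (fun x => (x.2, x.2 + x.1))
      ?_ ?_ ?_ ?_
    · intro x hx
      beta_reduce
      rw [Finset.mem_coe, Finset.mem_filter] at hx
      obtain ⟨-, h1, h2, h3⟩ := hx
      rw [hadj] at h3
      rw [Finset.mem_coe, hQ, Finset.mem_filter]
      refine ⟨Finset.mem_univ _, h3, h1, ?_⟩
      rw [add_sub_cancel]
      exact h2
    · intro x hx
      beta_reduce
      rw [Finset.mem_coe, hQ, Finset.mem_filter] at hx
      obtain ⟨-, h1, h2, h3⟩ := hx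
      rw [Finset.mem_coe, Finset.mem_filter]
      refine ⟨Finset.mem_univ _, h2, h3, ?_⟩
      rw [hadj, add_sub_cancel_left]
      exact h1
    · intro x hx
      beta_reduce
      simp
    · intro x hx
      beta_reduce
      simp
  have hfiber : Q.card = ∑ d ∈ A, (Q.filter (fun x => x.1 = d)).card := by
    refine Finset.card_eq_sum_card_fiberwise (fun x hx => ?_)
    rw [Finset.mem_coe, hQ, Finset.mem_filter] at hx
    rw [Finset.mem_coe, hA, Finset.mem_filter]
    exact ⟨Finset.mem_univ _, hx.2.1⟩
  have hfib2 : ∀ d ∈ A, (Q.filter (fun x => x.1 = d)).card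
      = (F.filter (fun u => u + d ∉ F)).card := by
    intro d hd
    beta_reduce
    rw [hA, Finset.mem_filter] at hd
    refine Finset.card_nbij' (fun x => x.2) (fun u => (d, u)) ?_ ?_ ?_ ?_
    · intro x hx
      beta_reduce
      rw [Finset.mem_coe, Finset.mem_filter, hQ, Finset.mem_filter] at hx
      obtain ⟨⟨-, h1, h2, h3⟩, h4⟩ := hx
      rw [Finset.mem_coe, Finset.mem_filter]
      rw [h4] at h3
      exact ⟨h2, h3⟩
    · intro u hu
      beta_reduce
      rw [Finset.mem_coe, Finset.mem_filter] at hu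
      rw [Finset.mem_coe, Finset.mem_filter, hQ, Finset.mem_filter]
      exact ⟨⟨Finset.mem_univ _, hd.2, hu.1, hu.2⟩, rfl⟩
    · intro x hx
      beta_reduce
      rw [Finset.mem_coe, Finset.mem_filter] at hx
      exact Prod.ext hx.2.symm rfl
    · intro u hu
      beta_reduce
      rfl
  have hfib3 : ∀ d ∈ A, (F.filter (fun u => u + d ∉ F)).card = min d.val (D - d.val) := by
    intro d hd
    beta_reduce
    rw [hA, Finset.mem_filter] at hd
    have hd0 : d ≠ 0 := hne0 d hd.2
    have hv1 : 1 ≤ d.val := Nat.pos_of_ne_zero (fun h => hd0 ((ZMod.val_eq_zero d).mp h))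
    have hvD : d.val < D := ZMod.val_lt d
    rw [← natkey D d.val hv1 hvD]
    refine Finset.card_nbij' (fun u => u.val) (fun x => (x : ZMod D)) ?_ ?_ ?_ ?_
    · intro u hu
      beta_reduce
      rw [Finset.mem_coe, Finset.mem_filter] at hu
      rw [Finset.mem_coe, Finset.mem_filter, Finset.mem_range]
      refine ⟨(hmemF u).mp hu.1, ?_⟩
      rw [← ZMod.val_add]
      intro hc
      exact hu.2 ((hmemF (u + d)).mpr hc)
    · intro x hx
      beta_reduce
      rw [Finset.mem_coe, Finset.mem_filter, Finset.mem_range] at hx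
      rw [Finset.mem_coe, Finset.mem_filter]
      have hxval : ((x : ℕ) : ZMod D).val = x := by
        rw [ZMod.val_natCast, Nat.mod_eq_of_lt (by omega)]
      refine ⟨(hmemF _).mpr (by rw [hxval]; exact hx.1), ?_⟩
      intro hc
      have hc2 := (hmemF _).mp hc
      rw [ZMod.val_add, hxval] at hc2
      exact hx.2 hc2
    · intro u hu
      beta_reduce
      exact ZMod.natCast_zmod_val u
    · intro x hx
      beta_reduce
      rw [Finset.mem_coe, Finset.mem_filter, Finset.mem_range] at hx
      rw [ZMod.val_natCast, Nat.mod_eq_of_lt (by omega)]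
  have hsum1 : ∑ d ∈ A, min d.val (D - d.val) = ∑ a ∈ T, min a (D - a) := by
    refine Finset.sum_nbij' (fun d => d.val) (fun a => (a : ZMod D)) ?_ ?_ ?_ ?_ ?_
    · intro d hd
      beta_reduce
      rw [hA, Finset.mem_filter] at hd
      rw [hT, Finset.mem_filter, Finset.mem_Icc]
      have hd0 := hne0 d hd.2
      have hv1 : 1 ≤ d.val := Nat.pos_of_ne_zero (fun h => hd0 ((ZMod.val_eq_zero d).mp h))
      have hvD := ZMod.val_lt d
      exact ⟨⟨hv1, by omega⟩, by rw [ZMod.natCast_zmod_val]; exact hd.2⟩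
    · intro a ha
      beta_reduce
      rw [hT, Finset.mem_filter, Finset.mem_Icc] at ha
      rw [hA, Finset.mem_filter]
      exact ⟨Finset.mem_univ _, ha.2⟩
    · intro d hd
      beta_reduce
      exact ZMod.natCast_zmod_val d
    · intro a ha
      beta_reduce
      rw [hT, Finset.mem_filter, Finset.mem_Icc] at ha
      rw [ZMod.val_natCast, Nat.mod_eq_of_lt (by omega)]
    · intro d hd
      beta_reduce
      rfl
  have hsum2 : ∑ a ∈ T, min a (D - a) = 2 * ∑ a ∈ T₁, a := by
    rw [hTsplit, Finset.sum_union hdisj]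
    have e1 : ∑ a ∈ T₁, min a (D - a) = ∑ a ∈ T₁, a := by
      refine Finset.sum_congr rfl fun a ha => ?_
      rw [hT₁, Finset.mem_filter, Finset.mem_Icc] at ha
      omega
    have e2 : ∑ a ∈ T₂, min a (D - a) = ∑ a ∈ T₁, a := by
      refine Finset.sum_nbij' (fun a => D - a) (fun b => D - b) hmem12 hmem21 ?_ ?_ ?_
      · intro a ha
        beta_reduce
        rw [hT₂, Finset.mem_filter, Finset.mem_Icc] at ha
        omega
      · intro b hb
        beta_reduce
        rw [hT₁, Finset.mem_filter, Finset.mem_Icc] at hb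
        omega
      · intro a ha
        beta_reduce
        rw [hT₂, Finset.mem_filter, Finset.mem_Icc] at ha
        omega
    rw [e1, e2]
    omega
  set B := Finset.univ.filter (fun d : ZMod D => χ d = -1) with hB
  have hsum0 : (A.card : ℂ) - (B.card : ℂ) = 0 := by
    have h := MulChar.sum_eq_zero_of_ne_one hne
    rw [← Finset.sum_filter_add_sum_filter_not Finset.univ (fun x => χ x = 1) (fun x => χ x)] at h
    rw [← Finset.sum_filter_add_sum_filter_not
      (Finset.univ.filter (fun x : ZMod D => ¬ χ x = 1)) (fun x => χ x = -1) (fun x => χ x)] at h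
    have e1 : ∑ x ∈ Finset.univ.filter (fun x : ZMod D => χ x = 1), χ x = (A.card : ℂ) := by
      rw [Finset.sum_congr rfl (fun x hx => (Finset.mem_filter.mp hx).2), Finset.sum_const,
        nsmul_eq_mul, mul_one, ← hA]
    have e2 : (Finset.univ.filter (fun x : ZMod D => ¬ χ x = 1)).filter (fun x => χ x = -1)
        = B := by
      rw [hB]
      ext x
      simp only [Finset.mem_filter, Finset.mem_univ, true_and]
      constructor
      · rintro ⟨-, h2⟩
        exact h2
      · intro h2
        beta_reduce
        refine ⟨?_, h2⟩
        rw [h2]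
        intro hc
        norm_num at hc
    have e3 : ∑ x ∈ B, χ x = -(B.card : ℂ) := by
      have hval : ∀ x ∈ B, χ x = (-1 : ℂ) := by
        intro x hx
        rw [hB, Finset.mem_filter] at hx
        exact hx.2
      rw [Finset.sum_congr rfl hval, Finset.sum_const, nsmul_eq_mul, mul_neg_one]
    have e4 : ∑ x ∈ (Finset.univ.filter (fun x : ZMod D => ¬ χ x = 1)).filter
        (fun x => ¬ χ x = -1), χ x = 0 := by
      refine Finset.sum_eq_zero fun x hx => ?_
      simp only [Finset.mem_filter, Finset.mem_univ, true_and] at hx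
      by_cases hu : IsUnit x
      · rcases hquad' x hu with h1 | h1
        · exact absurd h1 hx.1
        · exact absurd h1 hx.2
      · exact χ.map_nonunit hu
    rw [e1, e2, e3, e4] at h
    linear_combination h
  have hABcard : A.card = B.card := by
    have h := sub_eq_zero.mp hsum0
    exact_mod_cast h
  have hAuB : Finset.univ.filter (fun x : ZMod D => IsUnit x) = A ∪ B := by
    ext x
    rw [Finset.mem_filter, Finset.mem_union, hA, hB, Finset.mem_filter, Finset.mem_filter]
    simp only [Finset.mem_univ, true_and]
    constructor
    · exact fun h => hquad' x h
    · rintro (h | h) <;> by_contra hu <;> rw [χ.map_nonunit hu] at h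
      · exact one_ne_zero h.symm
      · norm_num at h
  have hdisjAB : Disjoint A B := by
    rw [Finset.disjoint_left]
    intro x hx1 hx2
    rw [hA, Finset.mem_filter] at hx1
    rw [hB, Finset.mem_filter] at hx2
    rw [hx1.2] at hx2
    norm_num at hx2
  have hunits : (Finset.univ.filter (fun x : ZMod D => IsUnit x)).card = D.totient := by
    rw [← ZMod.card_units_eq_totient D]
    have e : Finset.univ.filter (fun x : ZMod D => IsUnit x)
        = Finset.univ.map ⟨((↑) : (ZMod D)ˣ → ZMod D), Units.val_injective⟩ := by
      ext a
      simp only [Finset.mem_filter, Finset.mem_univ, true_and, Finset.mem_map,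
        Function.Embedding.coeFn_mk, exists_true_left]
      exact Iff.rfl
    rw [e, Finset.card_map, Finset.card_univ]
  have hTAcard : T.card = A.card := by
    refine Finset.card_nbij' (fun a => (a : ZMod D)) (fun d => d.val) ?_ ?_ ?_ ?_
    · intro a ha
      beta_reduce
      rw [Finset.mem_coe, hT, Finset.mem_filter, Finset.mem_Icc] at ha
      rw [Finset.mem_coe, hA, Finset.mem_filter]
      exact ⟨Finset.mem_univ _, ha.2⟩
    · intro d hd
      beta_reduce
      rw [Finset.mem_coe, hA, Finset.mem_filter] at hd
      rw [Finset.mem_coe, hT, Finset.mem_filter, Finset.mem_Icc]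
      have hd0 := hne0 d hd.2
      have hv1 : 1 ≤ d.val := Nat.pos_of_ne_zero (fun h => hd0 ((ZMod.val_eq_zero d).mp h))
      have hvD := ZMod.val_lt d
      exact ⟨⟨hv1, by omega⟩, by rw [ZMod.natCast_zmod_val]; exact hd.2⟩
    · intro a ha
      beta_reduce
      rw [Finset.mem_coe, hT, Finset.mem_filter, Finset.mem_Icc] at ha
      rw [ZMod.val_natCast, Nat.mod_eq_of_lt (by omega)]
    · intro d hd
      beta_reduce
      exact ZMod.natCast_zmod_val d
  have hcardT21 : T₂.card = T₁.card := by
    refine Finset.card_nbij' (fun a => D - a) (fun b => D - b) hmem12 hmem21 ?_ ?_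
    · intro a ha
      beta_reduce
      rw [Finset.mem_coe, hT₂, Finset.mem_filter, Finset.mem_Icc] at ha
      omega
    · intro b hb
      beta_reduce
      rw [Finset.mem_coe, hT₁, Finset.mem_filter, Finset.mem_Icc] at hb
      omega
  have h4 : 4 * T₁.card = D.totient := by
    have hcardU : A.card + B.card = D.totient := by
      rw [← hunits, hAuB, Finset.card_union_of_disjoint hdisjAB]
    have hTsplitcard : T.card = T₁.card + T₂.card := by
      rw [hTsplit, Finset.card_union_of_disjoint hdisj]
    omega
  constructor
  · have hfibsum : ∑ d ∈ A, (Q.filter (fun x => x.1 = d)).card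
        = ∑ d ∈ A, min d.val (D - d.val) :=
      Finset.sum_congr rfl (fun d hd => (hfib2 d hd).trans (hfib3 d hd))
    rw [hQcard, hfiber, hfibsum, hsum1, hsum2]
  · omega
end
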